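/- Let β(α) be defined implicitly by (1+α)^{-1/2} = ∫₀^∞ (1+β/u)^{-1/2} k_λ(u) du. Then β(α)/α is nondecreasing in α on (0,∞). -/

import Mathlib

open MeasureTheory ProbabilityTheory Real Set

/-- Gamma(shape l/2, rate l/2) density (on `(0,∞)`). -/
noncomputable def gammaPdf (l u : ℝ) : ℝ :=
  ((l / 2) ^ (l / 2) / Real.Gamma (l / 2)) * u ^ (l / 2 - 1) * Real.exp (-(l * u / 2))

lemma gammaPdf_eq_pdfReal {l u : ℝ} (hu : 0 ≤ u) :
    gammaPdf l u = gammaPDFReal (l / 2) (l / 2) u := by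
  rw [gammaPDFReal, if_pos hu, gammaPdf, show l / 2 * u = l * u / 2 by ring]

lemma measurable_gammaPdf (l : ℝ) : Measurable (gammaPdf l) :=
  (measurable_const.mul (measurable_id.pow_const _)).mul
    (((measurable_id.const_mul l).div_const 2).neg.exp)

lemma gammaPdf_pos {l u : ℝ} (hl : 0 < l) (hu : 0 < u) : 0 < gammaPdf l u := by
  rw [gammaPdf_eq_pdfReal hu.le]
  exact gammaPDFReal_pos (by linarith) (by linarith) hu

lemma lintegral_gammaPdf_Ioi (l : ℝ) (hl : 0 < l) :
    ∫⁻ u in Set.Ioi (0 : ℝ), gammaPDF (l / 2) (l / 2) u = 1 := by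
  have hl2 : 0 < l / 2 := by linarith
  have htot := lintegral_gammaPDF_eq_one hl2 hl2
  have hcompl := lintegral_add_compl (μ := volume) (gammaPDF (l / 2) (l / 2))
    (measurableSet_Ioi (a := (0:ℝ)))
  rw [compl_Ioi] at hcompl
  have hIic : ∫⁻ u in Set.Iic (0 : ℝ), gammaPDF (l / 2) (l / 2) u = 0 := by
    rw [← setLIntegral_congr (Iio_ae_eq_Iic (a := (0:ℝ)) (μ := volume))]
    exact lintegral_gammaPDF_of_nonpos le_rfl
  rw [hIic, add_zero] at hcompl
  rw [hcompl, htot]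

lemma integrableOn_gammaPdf {l : ℝ} (hl : 0 < l) :
    IntegrableOn (gammaPdf l) (Set.Ioi (0 : ℝ)) := by
  have hl2 : 0 < l / 2 := by linarith
  refine ⟨(measurable_gammaPdf l).aestronglyMeasurable, ?_⟩
  rw [hasFiniteIntegral_iff_norm]
  have hle : ∫⁻ u in Set.Ioi (0 : ℝ), ENNReal.ofReal ‖gammaPdf l u‖
      ≤ ∫⁻ u in Set.Ioi (0 : ℝ), gammaPDF (l / 2) (l / 2) u := by
    refine setLIntegral_mono (measurable_gammaPDFReal _ _).ennreal_ofReal ?_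
    intro u hu
    rw [gammaPDF_eq, if_pos (le_of_lt hu)]
    have h1 : gammaPdf l u = gammaPDFReal (l / 2) (l / 2) u := gammaPdf_eq_pdfReal (le_of_lt hu)
    have h2 : 0 ≤ gammaPdf l u := (gammaPdf_pos hl hu).le
    rw [Real.norm_eq_abs, abs_of_nonneg h2, h1]
    rw [gammaPDFReal]
    rw [if_pos (le_of_lt hu)]
  calc ∫⁻ u in Set.Ioi (0 : ℝ), ENNReal.ofReal ‖gammaPdf l u‖
      ≤ 1 := by rw [← lintegral_gammaPdf_Ioi l hl]; exact hle
    _ < ⊤ := by norm_num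

lemma integral_gammaPdf {l : ℝ} (hl : 0 < l) :
    ∫ u in Set.Ioi (0 : ℝ), gammaPdf l u = 1 := by
  have hnn : 0 ≤ᵐ[volume.restrict (Set.Ioi (0:ℝ))] gammaPdf l := by
    rw [Filter.EventuallyLE, ae_restrict_iff' measurableSet_Ioi]
    exact ae_of_all _ fun u hu => (gammaPdf_pos hl hu).le
  rw [integral_eq_lintegral_of_nonneg_ae hnn (measurable_gammaPdf l).aestronglyMeasurable]
  have : ∫⁻ u in Set.Ioi (0 : ℝ), ENNReal.ofReal (gammaPdf l u)
      = ∫⁻ u in Set.Ioi (0 : ℝ), gammaPDF (l / 2) (l / 2) u := by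
    refine setLIntegral_congr_fun measurableSet_Ioi (fun u hu => ?_)
    rw [gammaPDF, gammaPdf_eq_pdfReal (le_of_lt hu)]
  rw [this, lintegral_gammaPdf_Ioi l hl]
  simp

lemma measurable_fb (b : ℝ) : Measurable (fun u : ℝ => (1 + b / u) ^ (-(1 / 2 : ℝ))) :=
  (measurable_const.add (measurable_const.div measurable_id)).pow_const _

lemma fb_pos {b u : ℝ} (hb : 0 ≤ b) (hu : 0 < u) : 0 < (1 + b / u) ^ (-(1 / 2 : ℝ)) :=
  Real.rpow_pos_of_pos (by positivity) _

lemma fb_le_one {b u : ℝ} (hb : 0 ≤ b) (hu : 0 < u) : (1 + b / u) ^ (-(1 / 2 : ℝ)) ≤ 1 :=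
  Real.rpow_le_one_of_one_le_of_nonpos (by nlinarith [div_nonneg hb hu.le]) (by norm_num)

lemma integrable_fb_pdf {l b : ℝ} (hl : 0 < l) (hb : 0 ≤ b) :
    IntegrableOn (fun u => (1 + b / u) ^ (-(1 / 2 : ℝ)) * gammaPdf l u) (Set.Ioi (0 : ℝ)) := by
  refine Integrable.mono (integrableOn_gammaPdf hl)
    (((measurable_fb b).mul (measurable_gammaPdf l)).aestronglyMeasurable) ?_
  rw [ae_restrict_iff' measurableSet_Ioi]
  refine ae_of_all _ fun u hu => ?_
  rw [Real.norm_eq_abs, Real.norm_eq_abs, abs_mul]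
  have h1 := fb_pos hb hu
  have h2 := fb_le_one hb hu
  rw [abs_of_nonneg h1.le]
  nlinarith [abs_nonneg (gammaPdf l u)]

/-- Strict antitonicity of `b ↦ ∫ (1+b/u)^{-1/2} pdf`. -/
lemma G_strictAnti {l b1 b2 : ℝ} (hl : 0 < l) (hb1 : 0 ≤ b1) (h12 : b1 < b2) :
    ∫ u in Set.Ioi (0 : ℝ), (1 + b2 / u) ^ (-(1 / 2 : ℝ)) * gammaPdf l u
      < ∫ u in Set.Ioi (0 : ℝ), (1 + b1 / u) ^ (-(1 / 2 : ℝ)) * gammaPdf l u := by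
  have hb2 : 0 ≤ b2 := le_of_lt (lt_of_le_of_lt hb1 h12)
  have hi1 := integrable_fb_pdf hl hb1
  have hi2 := integrable_fb_pdf hl hb2
  rw [← sub_pos, ← integral_sub hi1 hi2]
  set g := fun u : ℝ => (1 + b1 / u) ^ (-(1 / 2 : ℝ)) * gammaPdf l u
      - (1 + b2 / u) ^ (-(1 / 2 : ℝ)) * gammaPdf l u with hg
  have hgpos : ∀ u ∈ Set.Ioi (0 : ℝ), 0 < g u := by
    intro u hu
    have hu' : (0:ℝ) < u := hu
    simp only [hg]
    have hlt : (1 + b2 / u) ^ (-(1 / 2 : ℝ)) < (1 + b1 / u) ^ (-(1 / 2 : ℝ)) := by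
      refine Real.rpow_lt_rpow_of_neg ?_ ?_ (by norm_num)
      · nlinarith [div_nonneg hb1 hu'.le]
      · have : b1 / u < b2 / u := by gcongr
        linarith
    nlinarith [gammaPdf_pos hl hu']
  rw [setIntegral_pos_iff_support_of_nonneg_ae]
  · have hsub : Set.Ioi (0 : ℝ) ⊆ Function.support g ∩ Set.Ioi (0 : ℝ) := by
      intro u hu
      exact ⟨ne_of_gt (hgpos u hu), hu⟩
    refine lt_of_lt_of_le ?_ (measure_mono hsub)
    rw [Real.volume_Ioi]
    simp
  · rw [Filter.EventuallyLE, ae_restrict_iff' measurableSet_Ioi]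
    exact ae_of_all _ fun u hu => (hgpos u hu).le
  · exact hi1.sub hi2

/-- The tangent-line inequality: for `c ≥ 1`, `x0 > 0`, `x ≥ 0`,
`c·M·(1+x)^{-1/2} + ((1+c x0)^{-1/2} - c·M·(1+x0)^{-1/2}) ≤ (1+c x)^{-1/2}`,
where `M = ((1+x0)/(1+c x0))^{3/2}`. -/
lemma key_ineq {c x0 : ℝ} (hc : 1 ≤ c) (hx0 : 0 < x0) :
    ∀ x : ℝ, 0 ≤ x →
      c * (((1 + x0) / (1 + c * x0)) ^ ((3 : ℝ) / 2)) * (1 + x) ^ (-(1 / 2 : ℝ))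
        + ((1 + c * x0) ^ (-(1 / 2 : ℝ))
            - c * (((1 + x0) / (1 + c * x0)) ^ ((3 : ℝ) / 2)) * (1 + x0) ^ (-(1 / 2 : ℝ)))
      ≤ (1 + c * x) ^ (-(1 / 2 : ℝ)) := by
  have hc0 : 0 < c := lt_of_lt_of_le one_pos hc
  set M : ℝ := ((1 + x0) / (1 + c * x0)) ^ ((3 : ℝ) / 2) with hM
  set F : ℝ → ℝ := fun x => (1 + c * x) ^ (-(1 / 2 : ℝ)) - c * M * (1 + x) ^ (-(1 / 2 : ℝ))
    with hF
  set D : ℝ → ℝ := fun x =>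
    c * 1 * (-(1 / 2 : ℝ)) * (1 + c * x) ^ (-(1 / 2 : ℝ) - 1)
      - c * M * (1 * (-(1 / 2 : ℝ)) * (1 + x) ^ (-(1 / 2 : ℝ) - 1)) with hD
  -- derivative of F
  have hderiv : ∀ x : ℝ, 0 ≤ x → HasDerivAt F (D x) x := by
    intro x hx
    have hQ0 : (0 : ℝ) < 1 + c * x := by positivity
    have hP0 : (0 : ℝ) < 1 + x := by linarith
    have h1 : HasDerivAt (fun x : ℝ => 1 + c * x) (c * 1) x :=
      ((hasDerivAt_id x).const_mul c).const_add 1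
    have h2 : HasDerivAt (fun x : ℝ => 1 + x) 1 x := by
      simpa using (hasDerivAt_id x).const_add 1
    have h1' := h1.rpow_const (p := -(1 / 2 : ℝ)) (Or.inl hQ0.ne')
    have h2' := (h2.rpow_const (p := -(1 / 2 : ℝ)) (Or.inl hP0.ne')).const_mul (c * M)
    exact h1'.sub h2'
  -- sign of D
  have hDsign : ∀ x : ℝ, 0 ≤ x → ((x0 ≤ x → 0 ≤ D x) ∧ (x ≤ x0 → D x ≤ 0)) := by
    intro x hx
    have hQ0 : (0 : ℝ) < 1 + c * x := by positivity
    have hP0 : (0 : ℝ) < 1 + x := by linarith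
    have hB0 : (0 : ℝ) < 1 + c * x0 := by positivity
    have hA0 : (0 : ℝ) < 1 + x0 := by linarith
    have hexp : (-(1 / 2 : ℝ) - 1) = -((3 : ℝ) / 2) := by norm_num
    have hMP : M * (1 + x) ^ (-(1 / 2 : ℝ) - 1)
        = ((1 + x0) / ((1 + c * x0) * (1 + x))) ^ ((3 : ℝ) / 2) := by
      rw [hexp, hM, Real.rpow_neg hP0.le, ← Real.inv_rpow hP0.le,
        ← Real.mul_rpow (by positivity) (by positivity)]
      congr 1
      field_simp
    have hQ : (1 + c * x) ^ (-(1 / 2 : ℝ) - 1) = ((1 + c * x)⁻¹) ^ ((3 : ℝ) / 2) := by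
      rw [hexp, Real.rpow_neg hQ0.le, ← Real.inv_rpow hQ0.le]
    constructor
    · intro hxx0
      have hbase : (1 + c * x)⁻¹ ≤ (1 + x0) / ((1 + c * x0) * (1 + x)) := by
        rw [inv_eq_one_div, div_le_div_iff₀ hQ0 (by positivity)]
        nlinarith [mul_nonneg (sub_nonneg.2 hc) (sub_nonneg.2 hxx0)]
      have := Real.rpow_le_rpow (by positivity) hbase (by norm_num : (0:ℝ) ≤ 3 / 2)
      rw [hD]
      rw [← hQ] at this
      nlinarith [hMP, this]
    · intro hxx0
      have hbase : (1 + x0) / ((1 + c * x0) * (1 + x)) ≤ (1 + c * x)⁻¹ := by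
        rw [inv_eq_one_div, div_le_div_iff₀ (by positivity) hQ0]
        nlinarith [mul_nonneg (sub_nonneg.2 hc) (sub_nonneg.2 hxx0)]
      have := Real.rpow_le_rpow (by positivity) hbase (by norm_num : (0:ℝ) ≤ 3 / 2)
      rw [hD]
      rw [← hQ] at this
      nlinarith [hMP, this]
  -- F x0 ≤ F x for all x ≥ 0
  have hFmin : ∀ x : ℝ, 0 ≤ x → F x0 ≤ F x := by
    have hcont : ∀ s : Set ℝ, s ⊆ Set.Ici (0:ℝ) → ContinuousOn F s := by
      intro s hs x hx
      exact ((hderiv x (hs hx)).differentiableAt).continuousAt.continuousWithinAt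
    have hmono : MonotoneOn F (Set.Ici x0) := by
      apply monotoneOn_of_deriv_nonneg (convex_Ici x0)
        (hcont _ (Set.Ici_subset_Ici.2 hx0.le))
      · intro x hx
        rw [interior_Ici] at hx
        exact ((hderiv x (le_of_lt (lt_of_le_of_lt hx0.le hx))).differentiableAt
          ).differentiableWithinAt
      · intro x hx
        rw [interior_Ici] at hx
        have h0x : (0:ℝ) ≤ x := le_of_lt (lt_of_le_of_lt hx0.le hx)
        rw [(hderiv x h0x).deriv]
        exact (hDsign x h0x).1 (le_of_lt hx)
    have hanti : AntitoneOn F (Set.Icc 0 x0) := by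
      apply antitoneOn_of_deriv_nonpos (convex_Icc 0 x0)
        (hcont _ (fun y hy => hy.1))
      · intro x hx
        rw [interior_Icc] at hx
        exact ((hderiv x hx.1.le).differentiableAt).differentiableWithinAt
      · intro x hx
        rw [interior_Icc] at hx
        rw [(hderiv x hx.1.le).deriv]
        exact (hDsign x hx.1.le).2 hx.2.le
    intro x hx
    rcases le_total x x0 with h | h
    · exact hanti ⟨hx, h⟩ ⟨hx0.le, le_rfl⟩ h
    · exact hmono (Set.mem_Ici.2 le_rfl) (Set.mem_Ici.2 h) h
  intro x hx
  have := hFmin x hx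
  simp only [hF] at this
  linarith

/-- If `β(α)` solves `(1+α)^{-1/2} = ∫₀^∞ (1+β/u)^{-1/2} k_λ(u) du`
for each `α > 0`, then `β(α)/α` is nondecreasing in `α` on `(0,∞)`. -/
theorem stmt12 (l : ℝ) (hl : 0 < l) (β : ℝ → ℝ)
    (hβ : ∀ α : ℝ, 0 < α → 0 < β α ∧
      (1 + α) ^ (-(1 / 2 : ℝ)) =
        ∫ u in Set.Ioi (0 : ℝ), (1 + β α / u) ^ (-(1 / 2 : ℝ)) * gammaPdf l u) :
    ∀ α1 α2 : ℝ, 0 < α1 → α1 ≤ α2 → β α1 / α1 ≤ β α2 / α2 := by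
  intro α1 α2 hα1 h12
  have hα2 : 0 < α2 := lt_of_lt_of_le hα1 h12
  obtain ⟨hβ1, hint1⟩ := hβ α1 hα1
  obtain ⟨hβ2, hint2⟩ := hβ α2 hα2
  set c : ℝ := α2 / α1 with hc
  have hc1 : 1 ≤ c := (one_le_div hα1).2 h12
  have hc0 : 0 < c := lt_of_lt_of_le one_pos hc1
  have hcα : c * α1 = α2 := by rw [hc]; field_simp
  set M : ℝ := ((1 + α1) / (1 + c * α1)) ^ ((3 : ℝ) / 2) with hM
  set C0 : ℝ := (1 + c * α1) ^ (-(1 / 2 : ℝ)) - c * M * (1 + α1) ^ (-(1 / 2 : ℝ)) with hC0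
  -- pointwise inequality on Ioi 0
  have hpt : ∀ u ∈ Set.Ioi (0 : ℝ),
      c * M * ((1 + β α1 / u) ^ (-(1 / 2 : ℝ)) * gammaPdf l u) + C0 * gammaPdf l u
        ≤ (1 + c * β α1 / u) ^ (-(1 / 2 : ℝ)) * gammaPdf l u := by
    intro u hu
    have hx : 0 ≤ β α1 / u := le_of_lt (div_pos hβ1 hu)
    have hkey := key_ineq hc1 hα1 (β α1 / u) hx
    have hrw : c * (β α1 / u) = c * β α1 / u := by ring
    rw [hrw] at hkey
    have hpdf := (gammaPdf_pos hl hu).le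
    nlinarith [hkey, hpdf]
  -- integrate
  have hint_lhs : IntegrableOn
      (fun u => c * M * ((1 + β α1 / u) ^ (-(1 / 2 : ℝ)) * gammaPdf l u) + C0 * gammaPdf l u)
      (Set.Ioi (0 : ℝ)) :=
    ((integrable_fb_pdf hl hβ1.le).const_mul (c * M)).add
      ((integrableOn_gammaPdf hl).const_mul C0)
  have hint_rhs : IntegrableOn
      (fun u => (1 + c * β α1 / u) ^ (-(1 / 2 : ℝ)) * gammaPdf l u) (Set.Ioi (0 : ℝ)) :=
    integrable_fb_pdf hl (by positivity)
  have hmono := setIntegral_mono_on hint_lhs hint_rhs measurableSet_Ioi hpt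
  have hval : ∫ u in Set.Ioi (0 : ℝ),
      (c * M * ((1 + β α1 / u) ^ (-(1 / 2 : ℝ)) * gammaPdf l u) + C0 * gammaPdf l u)
      = (1 + c * α1) ^ (-(1 / 2 : ℝ)) := by
    rw [integral_add ((integrable_fb_pdf hl hβ1.le).const_mul (c * M))
      ((integrableOn_gammaPdf hl).const_mul C0), integral_const_mul, integral_const_mul,
      ← hint1, integral_gammaPdf hl, hC0]
    ring
  rw [hval] at hmono
  -- conclude: (1+α2)^{-1/2} ≤ G(c β α1)
  rw [hcα, hint2] at hmono
  -- now show c * β α1 ≤ β α2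
  have hcb : c * β α1 ≤ β α2 := by
    by_contra hlt
    push_neg at hlt
    have := G_strictAnti hl hβ2.le hlt
    linarith
  rw [div_le_div_iff₀ hα1 hα2]
  have := mul_le_mul_of_nonneg_right hcb hα1.le
  rw [hc] at this
  have h2 : α2 / α1 * β α1 * α1 = β α1 * α2 := by field_simp
  linarith [h2 ▸ this]
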